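/- Let Γ be a G-arc-transitive digraph, where G is a group of automorphisms of Γ, let s ≥ 2 be an integer, and let v_0 → v_1 → ⋯ → v_s be an s-arc of Γ. Then Γ is (G,s)-arc-transitive if and only if for each i ∈ {1,…,s−1} the pointwise stabilizer factorizes as G_{v_1⋯v_i} = G_{v_0v_1⋯v_i} · G_{v_1⋯v_iv_{i+1}}. -/

import Mathlib

open scoped Pointwise

/-- An `s`-arc of the digraph `(V, r)`: vertices `v 0, v 1, …, v s` with
`v i → v (i+1)` for all `i < s`. -/
def IsSArc {V : Type*} (r : V → V → Prop) (s : ℕ) (v : ℕ → V) : Prop :=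
  ∀ i < s, r (v i) (v (i + 1))

/-- The digraph `(V, r)` is `(G, s)`-arc-transitive: `G` acts transitively on `s`-arcs. -/
def ArcTrans {V : Type*} (r : V → V → Prop) (G : Subgroup (Equiv.Perm V)) (s : ℕ) : Prop :=
  ∀ v w : ℕ → V, IsSArc r s v → IsSArc r s w → ∃ g ∈ G, ∀ i ≤ s, g (v i) = w i

private lemma perm_inv_fix {V : Type*} (g : Equiv.Perm V) (x : V) (h : g x = x) :
    g⁻¹ x = x := by
  have := congrArg (fun y => g⁻¹ y) h
  simpa using this.symm

/-- Let `Γ` be a `G`-arc-transitive digraph, `s ≥ 2`, and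
`v 0 → v 1 → ⋯ → v s` an `s`-arc. Then `Γ` is `(G,s)`-arc-transitive iff for each
`i ∈ {1,…,s−1}` we have `G_{v_1⋯v_i} = G_{v_0v_1⋯v_i} ⬝ G_{v_1⋯v_i v_{i+1}}`. -/
theorem stmt1 {V : Type*} [Finite V] (r : V → V → Prop)
    (hirr : ∀ a, ¬ r a a) (hasym : ∀ a b, r a b → ¬ r b a)
    (G : Subgroup (Equiv.Perm V))
    (hGaut : ∀ g ∈ G, ∀ a b, r a b ↔ r (g a) (g b))
    (harc : ArcTrans r G 1)
    (s : ℕ) (hs : 2 ≤ s)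
    (v : ℕ → V) (hv : IsSArc r s v) :
    ArcTrans r G s ↔
      ∀ i, 1 ≤ i → i ≤ s - 1 →
        {g : Equiv.Perm V | g ∈ G ∧ ∀ j, 1 ≤ j → j ≤ i → g (v j) = v j} =
          {g : Equiv.Perm V | g ∈ G ∧ ∀ j, j ≤ i → g (v j) = v j} *
            {g : Equiv.Perm V | g ∈ G ∧ ∀ j, 1 ≤ j → j ≤ i + 1 → g (v j) = v j} := by
  have hv1 : IsSArc r 1 v := fun j hj => hv j (by omega)
  constructor
  · -- forward direction
    intro hT i hi1 hi2
    ext a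
    simp only [Set.mem_setOf_eq, Set.mem_mul]
    constructor
    · rintro ⟨haG, hafix⟩
      have haG' : a⁻¹ ∈ G := inv_mem haG
      set u : V := a⁻¹ (v 0) with hu
      have ha1 : a⁻¹ (v 1) = v 1 := perm_inv_fix a (v 1) (hafix 1 le_rfl hi1)
      have hru : r u (v 1) := by
        have h01 : r (v 0) (v 1) := hv 0 (by omega)
        have := (hGaut a⁻¹ haG' (v 0) (v 1)).mp h01
        rwa [ha1] at this
      set w : ℕ → V := fun j => if j = 0 then u else v j with hw
      have hwarc : IsSArc r s w := by
        intro j hj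
        rcases Nat.eq_zero_or_pos j with h0 | h0
        · subst h0; simpa [hw] using hru
        · have h1 : j ≠ 0 := by omega
          have h2 : j + 1 ≠ 0 := by omega
          simpa only [hw, h1, h2, if_false] using hv j hj
      obtain ⟨g, hgG, hg⟩ := hT w v hwarc hv
      have hgu : g u = v 0 := by simpa [hw] using hg 0 (by omega)
      have hgfix : ∀ j, 1 ≤ j → j ≤ s → g (v j) = v j := by
        intro j hj1 hj2
        have hne : j ≠ 0 := by omega
        have := hg j hj2
        simpa [hw, hne] using this
      refine ⟨a * g⁻¹, ⟨mul_mem haG (inv_mem hgG), ?_⟩, g,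
        ⟨hgG, fun j hj1 hj2 => hgfix j hj1 (by omega)⟩, inv_mul_cancel_right a g⟩
      intro j hj
      rcases Nat.eq_zero_or_pos j with h0 | h0
      · subst h0
        have : g⁻¹ (v 0) = u := by rw [← hgu, Equiv.Perm.inv_def, Equiv.symm_apply_apply]
        simp only [Equiv.Perm.mul_apply, this, hu]
        exact a.apply_symm_apply (v 0)
      · have h1 : g⁻¹ (v j) = v j := perm_inv_fix g (v j) (hgfix j h0 (by omega))
        simp only [Equiv.Perm.mul_apply, h1]
        exact hafix j h0 hj
    · rintro ⟨b, ⟨hbG, hb⟩, c, ⟨hcG, hc⟩, rfl⟩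
      refine ⟨mul_mem hbG hcG, fun j hj1 hj2 => ?_⟩
      rw [Equiv.Perm.mul_apply, hc j hj1 (by omega), hb j hj2]
  · -- backward direction
    intro hfac
    -- key lemma: any in-neighbour of v 1 can be mapped to v 0 fixing v 1 .. v t
    have key : ∀ t, 1 ≤ t → t ≤ s → ∀ x, r x (v 1) →
        ∃ h ∈ G, h x = v 0 ∧ ∀ j, 1 ≤ j → j ≤ t → h (v j) = v j := by
      intro t ht1
      induction t, ht1 using Nat.le_induction with
      | base =>
        intro _ x hx
        set a : ℕ → V := fun j => if j = 0 then x else v j with ha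
        have harcx : IsSArc r 1 a := by
          intro j hj
          have hj0 : j = 0 := by omega
          subst hj0
          simpa [ha] using hx
        obtain ⟨g, hgG, hg⟩ := harc a v harcx hv1
        refine ⟨g, hgG, ?_, ?_⟩
        · simpa [ha] using hg 0 (by omega)
        · intro j hj1 hj2
          have hj : j = 1 := by omega
          subst hj
          simpa [ha] using hg 1 le_rfl
      | succ t ht ih =>
        intro hts x hx
        obtain ⟨h, hhG, hhx, hhfix⟩ := ih (by omega) x hx
        have hmem : h ∈ {g : Equiv.Perm V | g ∈ G ∧ ∀ j, 1 ≤ j → j ≤ t → g (v j) = v j} :=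
          ⟨hhG, hhfix⟩
        rw [hfac t ht (by omega)] at hmem
        obtain ⟨k, ⟨hkG, hk⟩, l, ⟨hlG, hl⟩, hkl⟩ := hmem
        refine ⟨l, hlG, ?_, fun j hj1 hj2 => hl j hj1 hj2⟩
        have hkl' : k * l = h := hkl
        have h1 : k (l x) = v 0 := by
          rw [← Equiv.Perm.mul_apply, hkl', hhx]
        exact k.injective (h1.trans (hk 0 (Nat.zero_le _)).symm)
    -- P t : every t-arc can be mapped onto v 0 .. v t
    have P : ∀ t, 1 ≤ t → t ≤ s → ∀ u : ℕ → V, IsSArc r t u →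
        ∃ g ∈ G, ∀ i ≤ t, g (u i) = v i := by
      intro t ht1
      induction t, ht1 using Nat.le_induction with
      | base => intro _ u hu; exact harc u v hu hv1
      | succ t ht ih =>
        intro hts u hu
        have hu' : IsSArc r t (fun j => u (j + 1)) := fun j hj => hu (j + 1) (by omega)
        have hv' : IsSArc r t (fun j => v (j + 1)) := fun j hj => hv (j + 1) (by omega)
        obtain ⟨g1, hg1G, hg1⟩ := ih (by omega) _ hu'
        obtain ⟨g2, hg2G, hg2⟩ := ih (by omega) _ hv'
        have hg2G' : g2⁻¹ ∈ G := inv_mem hg2G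
        have hg2inv : ∀ i ≤ t, g2⁻¹ (v i) = v (i + 1) := by
          intro i hi
          have h2 : g2 (v (i + 1)) = v i := hg2 i hi
          rw [← h2, Equiv.Perm.inv_def, Equiv.symm_apply_apply]
        have hrx : r (g2⁻¹ (g1 (u 0))) (v 1) := by
          have h0 : r (u 0) (u 1) := hu 0 (by omega)
          have h1 := (hGaut g1 hg1G _ _).mp h0
          have h2 := (hGaut g2⁻¹ hg2G' _ _).mp h1
          have h3 : g1 (u 1) = v 0 := hg1 0 (Nat.zero_le _)
          rwa [h3, hg2inv 0 (Nat.zero_le _)] at h2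
        obtain ⟨h, hhG, hhx, hhfix⟩ := key (t + 1) (by omega) hts _ hrx
        refine ⟨h * (g2⁻¹ * g1), mul_mem hhG (mul_mem hg2G' hg1G), ?_⟩
        intro i hi
        rcases Nat.eq_zero_or_pos i with h0 | h0
        · subst h0
          simp only [Equiv.Perm.mul_apply]
          exact hhx
        · obtain ⟨j, rfl⟩ : ∃ j, i = j + 1 := ⟨i - 1, by omega⟩
          have e1 : g1 (u (j + 1)) = v j := hg1 j (by omega)
          have e2 : g2⁻¹ (v j) = v (j + 1) := hg2inv j (by omega)
          have e3 : h (v (j + 1)) = v (j + 1) := hhfix (j + 1) (by omega) hi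
          simp only [Equiv.Perm.mul_apply, e1, e2, e3]
    intro u w hu hw
    obtain ⟨gu, hguG, hgu⟩ := P s (by omega) le_rfl u hu
    obtain ⟨gw, hgwG, hgw⟩ := P s (by omega) le_rfl w hw
    refine ⟨gw⁻¹ * gu, mul_mem (inv_mem hgwG) hguG, fun i hi => ?_⟩
    rw [Equiv.Perm.mul_apply, hgu i hi, ← hgw i hi, Equiv.Perm.inv_def, Equiv.symm_apply_apply]
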